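/- Let K be a nonempty closed subset of ℝⁿ and pr a Borel measurable selection of the metric projection onto K. For every ξ ∈ ℝⁿ and σ² > 0, the degrees of freedom dominates the Stein degrees of freedom: (1/σ²) Σᵢ ∫_{ℝⁿ} prᵢ(y)(yᵢ − ξᵢ) ψ(y; ξ, σ²) dy ≥ ∫_{ℝⁿ} (Σᵢ ∂ᵢprᵢ(y)) ψ(y; ξ, σ²) dy, i.e. df − df_S ≥ 0. -/

import Mathlib

open MeasureTheory Metric Asymptotics Filter
open scoped Topology

/-- The density of the `N(ξ, σ² Iₙ)` distribution on `ℝⁿ`. -/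
noncomputable def gaussDensity (n : ℕ) (ξ : EuclideanSpace ℝ (Fin n)) (σ2 : ℝ)
    (y : EuclideanSpace ℝ (Fin n)) : ℝ :=
  (2 * Real.pi * σ2) ^ (-(n : ℝ) / 2) * Real.exp (-‖y - ξ‖ ^ 2 / (2 * σ2))

/-- The set of points whose metric projection onto `K` is unique. -/
def uniqSet (n : ℕ) (K : Set (EuclideanSpace ℝ (Fin n))) : Set (EuclideanSpace ℝ (Fin n)) :=
  {y | ∃! x, x ∈ K ∧ dist y x = infDist y K}

/-- Differentiability at `y` in the extended sense relative to `D`, with derivative `A`. -/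
def DiffExtended {n : ℕ} (D : Set (EuclideanSpace ℝ (Fin n)))
    (f : EuclideanSpace ℝ (Fin n) → EuclideanSpace ℝ (Fin n))
    (y : EuclideanSpace ℝ (Fin n))
    (A : EuclideanSpace ℝ (Fin n) →L[ℝ] EuclideanSpace ℝ (Fin n)) : Prop :=
  y ∈ D ∧ ∃ N ∈ 𝓝 y, volume (N \ D) = 0 ∧
    (fun x => f x - f y - A (x - y)) =o[𝓝[D ∩ N] y] fun x => x - y

section aux
variable {n : ℕ}

private lemma coord_abs_le_norm (v : EuclideanSpace ℝ (Fin n)) (i : Fin n) : |v i| ≤ ‖v‖ := by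
  have h := abs_real_inner_le_norm v (EuclideanSpace.single i (1:ℝ))
  simpa [EuclideanSpace.inner_single_right] using h


private lemma pr_mono {K : Set (EuclideanSpace ℝ (Fin n))}
    {pr : EuclideanSpace ℝ (Fin n) → EuclideanSpace ℝ (Fin n)}
    (hsel : ∀ y, pr y ∈ K ∧ dist y (pr y) = infDist y K)
    (a b : EuclideanSpace ℝ (Fin n)) :
    0 ≤ (inner ℝ (pr a - pr b) (a - b) : ℝ) := by
  have h1 : ‖a - pr a‖ ≤ ‖a - pr b‖ := by
    rw [← dist_eq_norm, ← dist_eq_norm, (hsel a).2]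
    exact infDist_le_dist_of_mem (hsel b).1
  have h2 : ‖b - pr b‖ ≤ ‖b - pr a‖ := by
    rw [← dist_eq_norm, ← dist_eq_norm, (hsel b).2]
    exact infDist_le_dist_of_mem (hsel a).1
  have h1' : ‖a - pr a‖^2 ≤ ‖a - pr b‖^2 :=
    pow_le_pow_left₀ (norm_nonneg _) h1 2
  have h2' : ‖b - pr b‖^2 ≤ ‖b - pr a‖^2 :=
    pow_le_pow_left₀ (norm_nonneg _) h2 2
  rw [norm_sub_sq_real, norm_sub_sq_real] at h1' h2'
  rw [inner_sub_left, inner_sub_right, inner_sub_right]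
  have c1 := real_inner_comm a (pr a)
  have c2 := real_inner_comm a (pr b)
  have c3 := real_inner_comm b (pr a)
  have c4 := real_inner_comm b (pr b)
  linarith


private lemma pr_growth {K : Set (EuclideanSpace ℝ (Fin n))}
    {pr : EuclideanSpace ℝ (Fin n) → EuclideanSpace ℝ (Fin n)}
    (hsel : ∀ y, pr y ∈ K ∧ dist y (pr y) = infDist y K)
    {x₀ : EuclideanSpace ℝ (Fin n)} (hx₀ : x₀ ∈ K)
    (y : EuclideanSpace ℝ (Fin n)) : ‖pr y‖ ≤ 2 * ‖y‖ + ‖x₀‖ := by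
  have h1 : dist y (pr y) ≤ dist y x₀ := by
    rw [(hsel y).2]; exact infDist_le_dist_of_mem hx₀
  have h2 : ‖pr y‖ ≤ ‖pr y - y‖ + ‖y‖ := by
    simpa using norm_add_le (pr y - y) y
  have h3 : ‖pr y - y‖ = dist y (pr y) := by rw [dist_eq_norm, norm_sub_rev]
  have h4 : dist y x₀ ≤ ‖y‖ + ‖x₀‖ := by
    rw [dist_eq_norm]; exact norm_sub_le y x₀
  linarith


private lemma integrable_expgauss {ε : ℝ} (hε : 0 < ε) :
    Integrable (fun v : EuclideanSpace ℝ (Fin n) => Real.exp (-ε * ‖v‖^2)) := by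
  have h := GaussianFourier.integrable_cexp_neg_mul_sq_norm_add
    (V := EuclideanSpace ℝ (Fin n)) (b := (ε:ℂ)) (by simpa using hε) 0 0
  have h2 := h.norm
  refine h2.congr (Eventually.of_forall fun v => ?_)
  simp only [Complex.norm_exp]
  norm_num
  left
  norm_cast


private lemma integrable_of_gauss_bound {f : EuclideanSpace ℝ (Fin n) → ℝ}
    (hf : AEStronglyMeasurable f volume) (ξ : EuclideanSpace ℝ (Fin n))
    {ε : ℝ} (hε : 0 < ε) (c0 c1 c2 : ℝ)
    (hb : ∀ y, |f y| ≤ (c0 + c1 * ‖y - ξ‖ + c2 * ‖y - ξ‖^2) * Real.exp (-(ε * ‖y - ξ‖^2))) :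
    Integrable f := by
  set M : ℝ := (|c0| + |c1|) + (|c1| + |c2|) * (2/ε) with hM
  have hkey : ∀ r : ℝ, 0 ≤ r →
      (c0 + c1 * r + c2 * r^2) * Real.exp (-(ε * r^2)) ≤ M * Real.exp (-(ε/2 * r^2)) := by
    intro r hr
    have h1 : Real.exp (-(ε * r^2)) = Real.exp (-(ε/2 * r^2)) * Real.exp (-(ε/2 * r^2)) := by
      rw [← Real.exp_add]; ring_nf
    have h2 : (ε/2 * r^2) + 1 ≤ Real.exp (ε/2 * r^2) := Real.add_one_le_exp _
    have h3 : Real.exp (-(ε/2 * r^2)) * Real.exp (ε/2 * r^2) = 1 := by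
      rw [← Real.exp_add]; ring_nf; exact Real.exp_zero
    have h4 : 0 < Real.exp (-(ε/2 * r^2)) := Real.exp_pos _
    have h5 : (c0 + c1 * r + c2 * r^2) ≤ M * Real.exp (ε/2 * r^2) := by
      have hc0 : c0 ≤ |c0| := le_abs_self c0
      have hc1 : c1 * r ≤ |c1| * r := mul_le_mul_of_nonneg_right (le_abs_self c1) hr
      have hc2 : c2 * r^2 ≤ |c2| * r^2 := mul_le_mul_of_nonneg_right (le_abs_self c2) (sq_nonneg r)
      have hr1 : r ≤ 1 + r^2 := by nlinarith [sq_nonneg (r-1)]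
      have ha0 : 0 ≤ |c0| := abs_nonneg _
      have ha1 : 0 ≤ |c1| := abs_nonneg _
      have ha2 : 0 ≤ |c2| := abs_nonneg _
      have hMnn : 0 ≤ M := by positivity
      have hu : 0 ≤ ε/2 * r^2 := by positivity
      have e1 : (|c1|+|c2|) * (2/ε) * (ε/2*r^2) = (|c1|+|c2|)*r^2 := by
        field_simp
      have P1 := mul_le_mul_of_nonneg_left h2 hMnn
      have P2 : 0 ≤ (|c0|+|c1|) * (ε/2*r^2) := by positivity
      have P3 : 0 ≤ (|c1| + |c2|) * (2/ε) := by positivity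
      have P4 : 0 ≤ (|c1| + |c2|) * (2/ε) * (ε/2*r^2) := by positivity
      rw [hM] at P1 ⊢
      nlinarith [mul_le_mul_of_nonneg_left hr1 ha1]
    calc (c0 + c1 * r + c2 * r^2) * Real.exp (-(ε * r^2))
        ≤ (M * Real.exp (ε/2 * r^2)) * Real.exp (-(ε * r^2)) := by
          apply mul_le_mul_of_nonneg_right h5 (Real.exp_pos _).le
      _ = M * Real.exp (-(ε/2 * r^2)) := by
          rw [mul_assoc, ← Real.exp_add]
          congr 2
          ring
  have hg : Integrable (fun y : EuclideanSpace ℝ (Fin n) =>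
      M * Real.exp (-(ε/2) * ‖y - ξ‖^2)) :=
    ((integrable_expgauss (by linarith : (0:ℝ) < ε/2)).comp_sub_right ξ).const_mul M
  refine Integrable.mono' hg hf (Eventually.of_forall fun y => ?_)
  rw [Real.norm_eq_abs]
  calc |f y| ≤ (c0 + c1 * ‖y - ξ‖ + c2 * ‖y - ξ‖^2) * Real.exp (-(ε * ‖y - ξ‖^2)) := hb y
    _ ≤ M * Real.exp (-(ε/2 * ‖y - ξ‖^2)) := hkey _ (norm_nonneg _)
    _ = M * Real.exp (-(ε/2) * ‖y - ξ‖^2) := by ring_nf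


private lemma gauss_line (ξ : EuclideanSpace ℝ (Fin n)) (σ2 : ℝ)
    (y : EuclideanSpace ℝ (Fin n)) (i : Fin n) (t : ℝ) :
    gaussDensity n ξ σ2 (y - t • EuclideanSpace.single i (1:ℝ)) =
      (2 * Real.pi * σ2) ^ (-(n : ℝ) / 2) *
        Real.exp (-(‖y - ξ‖^2 - 2 * (y i - ξ i) * t + t^2) / (2 * σ2)) := by
  unfold gaussDensity
  congr 2
  have h1 : y - t • EuclideanSpace.single i (1:ℝ) - ξ = (y - ξ) - t • EuclideanSpace.single i (1:ℝ) := by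
    abel
  rw [h1, norm_sub_sq_real, inner_smul_right, EuclideanSpace.inner_single_right, norm_smul]
  have h2 : ((y : EuclideanSpace ℝ (Fin n)) - ξ) i = y i - ξ i := rfl
  rw [h2]
  simp [EuclideanSpace.norm_single, mul_pow, sq_abs]
  ring

private lemma poly_hasDerivAt (a b : ℝ) {σ2 : ℝ} (hσ2 : 0 < σ2) (c t : ℝ) :
    HasDerivAt (fun t : ℝ => c * Real.exp (-(a - 2*b*t + t^2)/(2*σ2)))
      (c * Real.exp (-(a - 2*b*t + t^2)/(2*σ2)) * ((b - t)/σ2)) t := by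
  have h0 : HasDerivAt (fun t : ℝ => a - 2*b*t + t^2) (-(2*b) + 2*t) t := by
    have h1 : HasDerivAt (fun t : ℝ => a - 2*b*t) (-(2*b)) t := by
      exact ((hasDerivAt_const t a).sub ((hasDerivAt_id t).const_mul (2*b))).congr_deriv (by ring)
    have h2 : HasDerivAt (fun t : ℝ => t^2) (2*t) t := by
      simpa using hasDerivAt_pow 2 t
    exact h1.add h2
  have h1 : HasDerivAt (fun t : ℝ => -(a - 2*b*t + t^2)/(2*σ2))
      ((-(-(2*b) + 2*t))/(2*σ2)) t := h0.neg.div_const (2*σ2)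
  have h2 := (h1.exp).const_mul c
  refine h2.congr_deriv ?_
  rw [mul_assoc c]
  congr 1
  field_simp
  ring


private lemma gauss_deriv0 (ξ : EuclideanSpace ℝ (Fin n)) {σ2 : ℝ} (hσ2 : 0 < σ2)
    (y : EuclideanSpace ℝ (Fin n)) (i : Fin n) :
    HasDerivAt (fun t : ℝ => gaussDensity n ξ σ2 (y - t • EuclideanSpace.single i (1:ℝ)))
      ((y i - ξ i)/σ2 * gaussDensity n ξ σ2 y) 0 := by
  have heq : (fun t : ℝ => gaussDensity n ξ σ2 (y - t • EuclideanSpace.single i (1:ℝ)))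
      = fun t : ℝ => (2 * Real.pi * σ2) ^ (-(n : ℝ) / 2) *
        Real.exp (-(‖y - ξ‖^2 - 2 * (y i - ξ i) * t + t^2) / (2 * σ2)) :=
    funext fun t => gauss_line ξ σ2 y i t
  rw [heq]
  have h := poly_hasDerivAt (‖y - ξ‖^2) (y i - ξ i) hσ2 ((2 * Real.pi * σ2) ^ (-(n : ℝ) / 2)) 0
  convert h using 1
  unfold gaussDensity
  ring_nf


private lemma gauss_mvt (ξ : EuclideanSpace ℝ (Fin n)) {σ2 : ℝ} (hσ2 : 0 < σ2)
    (y : EuclideanSpace ℝ (Fin n)) (i : Fin n) {h : ℝ} (hh0 : 0 ≤ h) (hh1 : h ≤ 1) :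
    |gaussDensity n ξ σ2 (y - h • EuclideanSpace.single i (1:ℝ)) - gaussDensity n ξ σ2 y|
      ≤ h * ((2*Real.pi*σ2) ^ (-(n:ℝ)/2) * Real.exp (1/σ2) *
          Real.exp (-(1/(4*σ2)) * ‖y-ξ‖^2) * ((‖y-ξ‖+1)/σ2)) := by
  set c : ℝ := (2*Real.pi*σ2) ^ (-(n:ℝ)/2) with hc
  have hcpos : 0 < c := by
    rw [hc]; positivity
  set r : ℝ := ‖y - ξ‖ with hr
  have hrnn : 0 ≤ r := norm_nonneg _
  set b : ℝ := y i - ξ i with hb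
  have hbr : |b| ≤ r := by
    have := coord_abs_le_norm (y - ξ) i
    simpa [hb, hr] using this
  set C : ℝ := c * Real.exp (1/σ2) * Real.exp (-(1/(4*σ2)) * r^2) * ((r+1)/σ2) with hC
  set G : ℝ → ℝ := fun t => c * Real.exp (-(r^2 - 2*b*t + t^2)/(2*σ2)) with hG
  have hderiv : ∀ t : ℝ, HasDerivAt G (G t * ((b - t)/σ2)) t := fun t =>
    poly_hasDerivAt (r^2) b hσ2 c t
  have hbound : ∀ t ∈ Set.Icc (0:ℝ) 1, ‖G t * ((b - t)/σ2)‖ ≤ C := by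
    intro t ht
    have ht0 : 0 ≤ t := ht.1
    have ht1 : t ≤ 1 := ht.2
    have harg : r^2/2 - 2 ≤ r^2 - 2*b*t + t^2 := by
      have h2bt : b*t ≤ r*t := mul_le_mul_of_nonneg_right (le_trans (le_abs_self b) hbr) ht0
      nlinarith [sq_nonneg (r-2), sq_nonneg t, mul_nonneg hrnn (sub_nonneg.2 ht1)]
    have hexp : Real.exp (-(r^2 - 2*b*t + t^2)/(2*σ2))
        ≤ Real.exp (1/σ2) * Real.exp (-(1/(4*σ2)) * r^2) := by
      rw [← Real.exp_add]
      apply Real.exp_le_exp.2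
      have h6 : -(r^2 - 2*b*t + t^2) ≤ -(r^2/2 - 2) := neg_le_neg harg
      calc -(r^2 - 2*b*t + t^2)/(2*σ2) ≤ -(r^2/2 - 2)/(2*σ2) :=
            (div_le_div_iff_of_pos_right (by positivity)).2 h6
        _ = 1/σ2 + -(1/(4*σ2)) * r^2 := by field_simp; ring
    have habs : |b - t| ≤ r + 1 := by
      have := abs_sub b t
      have hat : |t| = t := abs_of_nonneg ht0
      calc |b - t| ≤ |b| + |t| := abs_sub _ _
        _ ≤ r + 1 := by rw [hat]; linarith [hbr]
    rw [Real.norm_eq_abs, abs_mul, abs_mul, abs_of_pos hcpos,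
      Real.abs_exp, abs_div, abs_of_pos hσ2]
    rw [hC]
    calc c * Real.exp (-(r^2 - 2*b*t + t^2)/(2*σ2)) * (|b - t|/σ2)
        ≤ c * (Real.exp (1/σ2) * Real.exp (-(1/(4*σ2)) * r^2)) * ((r+1)/σ2) := by
          gcongr
      _ = c * Real.exp (1/σ2) * Real.exp (-(1/(4*σ2)) * r^2) * ((r+1)/σ2) := by ring
  have key := Convex.norm_image_sub_le_of_norm_hasDerivWithin_le
    (fun t (_ : t ∈ Set.Icc (0:ℝ) 1) => (hderiv t).hasDerivWithinAt) hbound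
    (convex_Icc 0 1) (Set.left_mem_Icc.2 zero_le_one) (Set.mem_Icc.2 ⟨hh0, hh1⟩)
  have hGh : G h = gaussDensity n ξ σ2 (y - h • EuclideanSpace.single i (1:ℝ)) :=
    (gauss_line ξ σ2 y i h).symm
  have hG0 : G 0 = gaussDensity n ξ σ2 y := by
    rw [hG]
    unfold gaussDensity
    rw [← hc, ← hr]
    norm_num
  rw [hGh, hG0] at key
  rw [Real.norm_eq_abs, Real.norm_eq_abs] at key
  calc |gaussDensity n ξ σ2 (y - h • EuclideanSpace.single i (1:ℝ)) - gaussDensity n ξ σ2 y|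
      ≤ C * |h - 0| := key
    _ = h * C := by rw [sub_zero, abs_of_nonneg hh0]; ring
    _ = h * (c * Real.exp (1/σ2) * Real.exp (-(1/(4*σ2)) * r^2) * ((r+1)/σ2)) := by rw [hC]


private lemma quotient_tendsto_ae
    (K : Set (EuclideanSpace ℝ (Fin n)))
    (pr : EuclideanSpace ℝ (Fin n) → EuclideanSpace ℝ (Fin n))
    (A : EuclideanSpace ℝ (Fin n) →
        (EuclideanSpace ℝ (Fin n) →L[ℝ] EuclideanSpace ℝ (Fin n)))
    (hA : ∀ᵐ y ∂(volume : Measure (EuclideanSpace ℝ (Fin n))),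
        DiffExtended (uniqSet n K) pr y (A y))
    (i : Fin n) :
    ∀ᵐ y ∂(volume : Measure (EuclideanSpace ℝ (Fin n))),
      Tendsto (fun k : ℕ =>
          (pr (y + (1/(k+1) : ℝ) • EuclideanSpace.single i (1:ℝ)) i - pr y i) / (1/(k+1) : ℝ))
        atTop (𝓝 (A y (EuclideanSpace.single i 1) i)) := by
  set e : EuclideanSpace ℝ (Fin n) := EuclideanSpace.single i (1:ℝ) with he
  set hk : ℕ → ℝ := fun k => (1/(k+1) : ℝ) with hhk
  have hkpos : ∀ k : ℕ, 0 < hk k := fun k => by positivity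
  have hDnull : volume (uniqSet n K)ᶜ = 0 := by
    have h1 : ∀ᵐ y ∂(volume : Measure (EuclideanSpace ℝ (Fin n))), y ∈ uniqSet n K :=
      hA.mono fun y hy => hy.1
    rw [ae_iff] at h1
    simpa [Set.compl_def] using h1
  have hall : ∀ᵐ y ∂(volume : Measure (EuclideanSpace ℝ (Fin n))),
      ∀ k : ℕ, y + hk k • e ∈ uniqSet n K := by
    rw [ae_all_iff]
    intro k
    rw [ae_iff]
    have : {y : EuclideanSpace ℝ (Fin n) | ¬ (y + hk k • e ∈ uniqSet n K)}
        = (fun y => y + hk k • e) ⁻¹' (uniqSet n K)ᶜ := rfl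
    rw [this, measure_preimage_add_right]
    exact hDnull
  filter_upwards [hA, hall] with y hy hmem
  obtain ⟨hyD, N, hN, -, hlo⟩ := hy
  have htend0 : Tendsto hk atTop (𝓝 0) := tendsto_one_div_add_atTop_nhds_zero_nat
  have hxk : Tendsto (fun k => y + hk k • e) atTop (𝓝 y) := by
    have h1 : Tendsto (fun k => hk k • e) atTop (𝓝 ((0:ℝ) • e)) := htend0.smul_const e
    have h2 := tendsto_const_nhds (x := y) (f := atTop (α := ℕ)) |>.add h1
    simpa using h2
  have hinN : ∀ᶠ k in atTop, y + hk k • e ∈ N := hxk.eventually_mem hN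
  have htendW : Tendsto (fun k => y + hk k • e) atTop (𝓝[uniqSet n K ∩ N] y) := by
    rw [tendsto_nhdsWithin_iff]
    exact ⟨hxk, hinN.mono fun k hkN => ⟨hmem k, hkN⟩⟩
  have hcomp := hlo.comp_tendsto htendW
  simp only [Function.comp_def, add_sub_cancel_left] at hcomp
  have hnorm : (fun k => ‖pr (y + hk k • e) - pr y - A y (hk k • e)‖)
      =o[atTop] fun k => hk k := by
    have h1 := hcomp.norm_norm
    refine h1.congr (fun k => rfl) (fun k => ?_)
    rw [norm_smul, Real.norm_eq_abs, abs_of_pos (hkpos k), he, EuclideanSpace.norm_single]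
    norm_num
  have hdiv := hnorm.tendsto_div_nhds_zero
  have hb : ∀ k : ℕ, |(pr (y + hk k • e) i - pr y i) / hk k - A y e i|
      ≤ ‖pr (y + hk k • e) - pr y - A y (hk k • e)‖ / hk k := by
    intro k
    have hAsmul : A y (hk k • e) = hk k • A y e := (A y).map_smul _ _
    have hcoord : (pr (y + hk k • e) - pr y - A y (hk k • e)) i
        = pr (y + hk k • e) i - pr y i - hk k * (A y e i) := by
      rw [hAsmul]; rfl
    have h1 := coord_abs_le_norm (pr (y + hk k • e) - pr y - A y (hk k • e)) i
    rw [hcoord] at h1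
    have h2 : (pr (y + hk k • e) i - pr y i) / hk k - A y e i
        = (pr (y + hk k • e) i - pr y i - hk k * (A y e i)) / hk k := by
      field_simp
      rw [eq_div_iff (hkpos k).ne', sub_mul, div_mul_cancel₀ _ (hkpos k).ne']
      ring
    rw [h2, abs_div, abs_of_pos (hkpos k)]
    gcongr
  have hsq : Tendsto (fun k => |(pr (y + hk k • e) i - pr y i) / hk k - A y e i|)
      atTop (𝓝 0) := squeeze_zero (fun k => abs_nonneg _) hb hdiv
  rw [tendsto_iff_dist_tendsto_zero]
  simp only [Real.dist_eq]
  exact hsq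


private lemma pr_coord_mono {K : Set (EuclideanSpace ℝ (Fin n))}
    {pr : EuclideanSpace ℝ (Fin n) → EuclideanSpace ℝ (Fin n)}
    (hsel : ∀ y, pr y ∈ K ∧ dist y (pr y) = infDist y K)
    (y : EuclideanSpace ℝ (Fin n)) (i : Fin n) {h : ℝ} (hh : 0 < h) :
    pr y i ≤ pr (y + h • EuclideanSpace.single i (1:ℝ)) i := by
  have hm := pr_mono hsel (y + h • EuclideanSpace.single i (1:ℝ)) y
  rw [add_sub_cancel_left] at hm
  rw [real_inner_smul_right] at hm
  have h2 : (inner ℝ (pr (y + h • EuclideanSpace.single i (1:ℝ)) - pr y)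
      (EuclideanSpace.single i (1:ℝ)) : ℝ)
      = pr (y + h • EuclideanSpace.single i (1:ℝ)) i - pr y i := by
    rw [real_inner_comm, EuclideanSpace.inner_single_left]
    simp
  rw [h2] at hm
  have := (mul_nonneg_iff_of_pos_left hh).1 hm
  linarith


private lemma coord_key
    {K : Set (EuclideanSpace ℝ (Fin n))} (hne : K.Nonempty)
    {pr : EuclideanSpace ℝ (Fin n) → EuclideanSpace ℝ (Fin n)}
    (hmeas : Measurable pr)
    (hsel : ∀ y, pr y ∈ K ∧ dist y (pr y) = infDist y K)
    (A : EuclideanSpace ℝ (Fin n) →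
        (EuclideanSpace ℝ (Fin n) →L[ℝ] EuclideanSpace ℝ (Fin n)))
    (hA : ∀ᵐ y ∂(volume : Measure (EuclideanSpace ℝ (Fin n))),
        DiffExtended (uniqSet n K) pr y (A y))
    (ξ : EuclideanSpace ℝ (Fin n)) {σ2 : ℝ} (hσ2 : 0 < σ2) (i : Fin n) :
    Integrable (fun y => A y (EuclideanSpace.single i 1) i * gaussDensity n ξ σ2 y) ∧
      ∫ y, A y (EuclideanSpace.single i 1) i * gaussDensity n ξ σ2 y ≤
        (1/σ2) * ∫ y, pr y i * (y i - ξ i) * gaussDensity n ξ σ2 y := by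
  obtain ⟨x₀, hx₀⟩ := hne
  set ψ : EuclideanSpace ℝ (Fin n) → ℝ := gaussDensity n ξ σ2 with hψ
  set e : EuclideanSpace ℝ (Fin n) := EuclideanSpace.single i (1:ℝ) with he
  set c : ℝ := (2*Real.pi*σ2) ^ (-(n:ℝ)/2) with hcdef
  have hcpos : 0 < c := by rw [hcdef]; positivity
  set hk : ℕ → ℝ := fun k => (1/(k+1) : ℝ) with hhk
  have hkpos : ∀ k : ℕ, 0 < hk k := fun k => by positivity
  have hkle1 : ∀ k : ℕ, hk k ≤ 1 := fun k => by
    rw [hhk]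
    rw [div_le_one (by positivity)]
    simp
  have hψ_def : ∀ y, ψ y = c * Real.exp (-‖y - ξ‖^2/(2*σ2)) := fun y => rfl
  have hψpos : ∀ y, 0 < ψ y := fun y => by rw [hψ_def]; positivity
  have hψcont : Continuous ψ := by
    rw [hψ]; unfold gaussDensity; fun_prop
  have hpri_meas : Measurable (fun y : EuclideanSpace ℝ (Fin n) => pr y i) :=
    by fun_prop
  set Cy : EuclideanSpace ℝ (Fin n) → ℝ := fun y =>
    c * Real.exp (1/σ2) * Real.exp (-(1/(4*σ2)) * ‖y-ξ‖^2) * ((‖y-ξ‖+1)/σ2) with hCy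
  have hCynn : ∀ y, 0 ≤ Cy y := fun y => by rw [hCy]; positivity
  set D : EuclideanSpace ℝ (Fin n) → ℝ := fun y => (2*‖y‖+‖x₀‖) * Cy y with hD
  have hDnn : ∀ y, 0 ≤ D y := fun y => by
    rw [hD]
    exact mul_nonneg (by positivity) (hCynn y)
  have hDcont : Continuous D := by rw [hD, hCy]; fun_prop
  have hnorm_y : ∀ y : EuclideanSpace ℝ (Fin n), ‖y‖ ≤ ‖y - ξ‖ + ‖ξ‖ := fun y => by
    simpa using norm_add_le (y - ξ) ξ
  set κ : ℝ := c * Real.exp (1/σ2) / σ2 with hκ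
  have hκnn : 0 ≤ κ := by rw [hκ]; positivity
  have intD : Integrable D := by
    apply integrable_of_gauss_bound hDcont.aestronglyMeasurable ξ
      (by positivity : (0:ℝ) < 1/(4*σ2))
      ((2*‖ξ‖+‖x₀‖) * κ) ((2+2*‖ξ‖+‖x₀‖) * κ) (2*κ)
    intro y
    rw [abs_of_nonneg (hDnn y)]
    have hexp : Real.exp (-(1/(4*σ2)) * ‖y-ξ‖^2) = Real.exp (-(1/(4*σ2) * ‖y-ξ‖^2)) := by
      rw [neg_mul]
    have hfact : D y = ((2*‖y‖+‖x₀‖) * (κ * (‖y-ξ‖+1))) * Real.exp (-(1/(4*σ2) * ‖y-ξ‖^2)) := by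
      rw [hD, hCy, ← hexp, hκ]
      field_simp
    rw [hfact]
    apply mul_le_mul_of_nonneg_right _ (Real.exp_pos _).le
    have h1 : 2*‖y‖+‖x₀‖ ≤ 2*‖y-ξ‖+2*‖ξ‖+‖x₀‖ := by linarith [hnorm_y y]
    calc (2*‖y‖+‖x₀‖) * (κ * (‖y-ξ‖+1))
        ≤ (2*‖y-ξ‖+2*‖ξ‖+‖x₀‖) * (κ * (‖y-ξ‖+1)) := by
          apply mul_le_mul_of_nonneg_right h1 (by positivity)
      _ = (2*‖ξ‖+‖x₀‖) * κ + (2+2*‖ξ‖+‖x₀‖) * κ * ‖y-ξ‖ + 2*κ * ‖y-ξ‖^2 := by ring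
  have habs_pr : ∀ y, |pr y i| ≤ 2*‖y‖+‖x₀‖ := fun y =>
    (coord_abs_le_norm (pr y) i).trans (pr_growth hsel hx₀ y)
  have int1 : Integrable (fun y => pr y i * ψ y) := by
    apply integrable_of_gauss_bound
      ((hpri_meas.mul hψcont.measurable).aestronglyMeasurable) ξ
      (by positivity : (0:ℝ) < 1/(2*σ2)) ((2*‖ξ‖+‖x₀‖)*c) (2*c) 0
    intro y
    rw [Pi.mul_apply, abs_mul, abs_of_pos (hψpos y), hψ_def]
    have hexp : Real.exp (-‖y-ξ‖^2/(2*σ2)) = Real.exp (-(1/(2*σ2) * ‖y-ξ‖^2)) := by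
      congr 1; ring
    rw [hexp, ← mul_assoc]
    apply mul_le_mul_of_nonneg_right _ (Real.exp_pos _).le
    have h1 := habs_pr y
    have h2 := hnorm_y y
    nlinarith [hcpos.le, abs_nonneg (pr y i), norm_nonneg (y - ξ)]
  have int3 : ∀ h : ℝ, 0 < h → h ≤ 1 →
      Integrable (fun y => pr y i * ψ (y - h • e)) := by
    intro h hh0 hh1
    have hm3 : AEStronglyMeasurable (fun y => pr y i * ψ (y - h • e)) volume :=
      (hpri_meas.mul
        ((hψcont.comp (continuous_id.sub continuous_const)).measurable)).aestronglyMeasurable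
    refine Integrable.mono' (int1.abs.add intD) hm3 (Eventually.of_forall fun y => ?_)
    have hmvt : |ψ (y - h • e) - ψ y| ≤ h * Cy y := gauss_mvt ξ hσ2 y i hh0.le hh1
    have h1 : ψ (y - h • e) ≤ ψ y + Cy y := by
      have h2 := (abs_le.1 hmvt).2
      nlinarith [hCynn y]
    rw [Real.norm_eq_abs, abs_mul]
    have e0 : |ψ (y - h • e)| = ψ (y - h • e) := abs_of_pos (hψpos _)
    have e1 : |pr y i| * ψ y = |pr y i * ψ y| := by rw [abs_mul, abs_of_pos (hψpos y)]
    have e2 : |pr y i| * Cy y ≤ D y := by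
      rw [hD]; exact mul_le_mul_of_nonneg_right (habs_pr y) (hCynn y)
    calc |pr y i| * |ψ (y - h • e)| = |pr y i| * ψ (y - h • e) := by rw [e0]
      _ ≤ |pr y i| * (ψ y + Cy y) := by
          apply mul_le_mul_of_nonneg_left h1 (abs_nonneg _)
      _ = |pr y i| * ψ y + |pr y i| * Cy y := by ring
      _ ≤ |pr y i * ψ y| + D y := by rw [e1] at *; linarith
  have int2 : ∀ h : ℝ, 0 < h → h ≤ 1 →
      Integrable (fun y => pr (y + h • e) i * ψ y) := by
    intro h hh0 hh1
    have h3 := (int3 h hh0 hh1).comp_add_right (h • e)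
    simpa only [add_sub_cancel_right] using h3
  have et : ∀ h : ℝ, ∫ y, pr (y + h • e) i * ψ y = ∫ y, pr y i * ψ (y - h • e) := by
    intro h
    have h1 := integral_add_right_eq_self (μ := (volume : Measure (EuclideanSpace ℝ (Fin n)))) (fun z => pr z i * ψ (z - h • e)) (h • e)
    calc ∫ y, pr (y + h • e) i * ψ y
        = ∫ y, pr (y + h • e) i * ψ (y + h • e - h • e) := by
          apply integral_congr_ae
          exact Eventually.of_forall fun y => by simp only [add_sub_cancel_right]
      _ = ∫ y, pr y i * ψ (y - h • e) := h1
  set Fder : EuclideanSpace ℝ (Fin n) → ℝ := fun y => pr y i * ((y i - ξ i)/σ2 * ψ y) with hFder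
  have hDCT : Tendsto (fun k : ℕ => ∫ y, pr y i * ((ψ (y - hk k • e) - ψ y)/hk k)) atTop
      (𝓝 (∫ y, Fder y)) := by
    apply tendsto_integral_of_dominated_convergence D
      (fun k => (hpri_meas.mul
        (((hψcont.comp (continuous_id.sub continuous_const)).sub hψcont).div_const
          (hk k)).measurable).aestronglyMeasurable)
      intD
    · intro k
      refine Eventually.of_forall fun y => ?_
      simp only [Pi.mul_apply, Pi.sub_apply, Function.comp_apply, id]
      rw [Real.norm_eq_abs, abs_mul, abs_div, abs_of_pos (hkpos k)]
      have hmvt : |ψ (y - hk k • e) - ψ y| ≤ hk k * Cy y :=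
        gauss_mvt ξ hσ2 y i (hkpos k).le (hkle1 k)
      have h1 : |ψ (y - hk k • e) - ψ y| / hk k ≤ Cy y :=
        (div_le_iff₀ (hkpos k)).2 (by rw [mul_comm]; exact hmvt)
      rw [hD]
      exact mul_le_mul (habs_pr y) h1 (by positivity) (by positivity)
    · refine Eventually.of_forall fun y => ?_
      have hder := gauss_deriv0 ξ hσ2 y i
      have hslope := hasDerivAt_iff_tendsto_slope.1 hder
      have hkt : Tendsto hk atTop (𝓝[≠] (0:ℝ)) := by
        rw [tendsto_nhdsWithin_iff]
        exact ⟨tendsto_one_div_add_atTop_nhds_zero_nat,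
          Eventually.of_forall fun k => (hkpos k).ne'⟩
      have h2 := hslope.comp hkt
      have h4 : Tendsto (fun k => (ψ (y - hk k • e) - ψ y)/hk k) atTop
          (𝓝 ((y i - ξ i)/σ2 * ψ y)) := by
        refine h2.congr fun k => ?_
        show slope (fun t : ℝ => ψ (y - t • e)) 0 (hk k) = _
        rw [slope_def_field]
        simp only [zero_smul, sub_zero]
      exact h4.const_mul (pr y i)
  have hLeq : ∫ y, Fder y = (1/σ2) * ∫ y, pr y i * (y i - ξ i) * ψ y := by
    rw [← integral_const_mul]
    apply integral_congr_ae
    refine Eventually.of_forall fun y => ?_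
    rw [hFder]; ring
  set Q : ℕ → EuclideanSpace ℝ (Fin n) → ℝ :=
    fun k y => ((pr (y + hk k • e) i - pr y i)/hk k) * ψ y with hQ
  have hQmeas : ∀ k, Measurable (Q k) := by
    intro k
    rw [hQ]
    apply Measurable.mul _ hψcont.measurable
    exact ((hpri_meas.comp (measurable_add_const (hk k • e))).sub hpri_meas).div_const _
  have hQnn : ∀ k y, 0 ≤ Q k y := fun k y =>
    mul_nonneg (div_nonneg (sub_nonneg.2 (pr_coord_mono hsel y i (hkpos k)))
      (hkpos k).le) (hψpos y).le
  have hQint : ∀ k, Integrable (Q k) := by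
    intro k
    have h1 := ((int2 (hk k) (hkpos k) (hkle1 k)).sub int1).const_mul (1/hk k)
    refine h1.congr (Eventually.of_forall fun y => ?_)
    rw [hQ]
    field_simp
    simp only [Pi.sub_apply]
    ring
  have hQeq : ∀ k, ∫ y, Q k y = ∫ y, pr y i * ((ψ (y - hk k • e) - ψ y)/hk k) := by
    intro k
    have e1 : ∫ y, Q k y
        = (1/hk k) * ((∫ y, pr (y + hk k • e) i * ψ y) - ∫ y, pr y i * ψ y) := by
      rw [← integral_sub (int2 (hk k) (hkpos k) (hkle1 k)) int1, ← integral_const_mul]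
      apply integral_congr_ae
      refine Eventually.of_forall fun y => ?_
      rw [hQ]
      field_simp
    have e2 : ∫ y, pr y i * ((ψ (y - hk k • e) - ψ y)/hk k)
        = (1/hk k) * ((∫ y, pr y i * ψ (y - hk k • e)) - ∫ y, pr y i * ψ y) := by
      rw [← integral_sub (int3 (hk k) (hkpos k) (hkle1 k)) int1, ← integral_const_mul]
      apply integral_congr_ae
      refine Eventually.of_forall fun y => ?_
      field_simp
    rw [e1, e2, et (hk k)]
  have hQlim : Tendsto (fun k => ∫ y, Q k y) atTop (𝓝 (∫ y, Fder y)) := by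
    have hfe : (fun k => ∫ y, Q k y)
        = fun k => ∫ y, pr y i * ((ψ (y - hk k • e) - ψ y)/hk k) := funext hQeq
    rw [hfe]; exact hDCT
  set L : ℝ := (1/σ2) * ∫ y, pr y i * (y i - ξ i) * ψ y with hL
  have hQlimL : Tendsto (fun k => ∫ y, Q k y) atTop (𝓝 L) := by
    rw [← hLeq]; exact hQlim
  have hLnn : 0 ≤ L := ge_of_tendsto' hQlimL fun k => integral_nonneg (hQnn k)
  have haeQ : ∀ᵐ y ∂(volume : Measure (EuclideanSpace ℝ (Fin n))),
      Tendsto (fun k => Q k y) atTop (𝓝 (A y e i * ψ y)) := by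
    filter_upwards [quotient_tendsto_ae K pr A hA i] with y hy
    exact hy.mul_const (ψ y)
  have hFmeas : AEMeasurable (fun y => A y e i * ψ y)
      (volume : Measure (EuclideanSpace ℝ (Fin n))) :=
    aemeasurable_of_tendsto_metrizable_ae atTop (fun k => (hQmeas k).aemeasurable) haeQ
  have hFnn : ∀ᵐ y ∂(volume : Measure (EuclideanSpace ℝ (Fin n))), 0 ≤ A y e i * ψ y := by
    filter_upwards [haeQ] with y hy
    exact ge_of_tendsto' hy fun k => hQnn k y
  have hFat := lintegral_liminf_le (μ := (volume : Measure (EuclideanSpace ℝ (Fin n)))) (u := (atTop : Filter ℕ)) (fun k => (hQmeas k).ennreal_ofReal)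
  have haeq2 : (fun y => ENNReal.ofReal (A y e i * ψ y)) =ᵐ[volume]
      (fun y => liminf (fun k => ENNReal.ofReal (Q k y)) atTop) := by
    filter_upwards [haeQ] with y hy
    exact ((ENNReal.continuous_ofReal.tendsto _).comp hy).liminf_eq.symm
  have hlin : liminf (fun k => ∫⁻ y, ENNReal.ofReal (Q k y)) atTop = ENNReal.ofReal L := by
    have h1 : ∀ k, (∫⁻ y, ENNReal.ofReal (Q k y)) = ENNReal.ofReal (∫ y, Q k y) := fun k =>
      (ofReal_integral_eq_lintegral_ofReal (hQint k) (Eventually.of_forall (hQnn k))).symm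
    have h2 : Tendsto (fun k => ∫⁻ y, ENNReal.ofReal (Q k y)) atTop
        (𝓝 (ENNReal.ofReal L)) := by
      simp only [h1]
      exact (ENNReal.continuous_ofReal.tendsto L).comp hQlimL
    exact h2.liminf_eq
  have hkey : (∫⁻ y, ENNReal.ofReal (A y e i * ψ y)) ≤ ENNReal.ofReal L := by
    rw [lintegral_congr_ae haeq2]
    exact hFat.trans (le_of_eq hlin)
  have hInt : Integrable (fun y => A y e i * ψ y) := by
    refine ⟨hFmeas.aestronglyMeasurable, ?_⟩
    rw [hasFiniteIntegral_iff_ofReal hFnn]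
    exact lt_of_le_of_lt hkey ENNReal.ofReal_lt_top
  refine ⟨hInt, ?_⟩
  have h1 : ∫ y, A y e i * ψ y = (∫⁻ y, ENNReal.ofReal (A y e i * ψ y)).toReal :=
    integral_eq_lintegral_of_nonneg_ae hFnn hFmeas.aestronglyMeasurable
  rw [h1]
  calc (∫⁻ y, ENNReal.ofReal (A y e i * ψ y)).toReal
      ≤ (ENNReal.ofReal L).toReal :=
        ENNReal.toReal_mono ENNReal.ofReal_ne_top hkey
    _ = L := ENNReal.toReal_ofReal hLnn


end aux

/-- **The degrees of freedom dominates the Stein degrees of freedom: df ≥ df_S.**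
For any Borel measurable selection `pr` of the metric projection onto a nonempty closed
`K ⊆ ℝⁿ`, any a.e. defined extended-sense derivative `A` of `pr`, any `ξ ∈ ℝⁿ` and `σ² > 0`:
`∫ (Σᵢ ∂ᵢprᵢ(y)) ψ(y; ξ, σ²) dy ≤ (1/σ²) Σᵢ ∫ prᵢ(y)(yᵢ - ξᵢ) ψ(y; ξ, σ²) dy`. -/

theorem dfS_le_df
    (n : ℕ) (K : Set (EuclideanSpace ℝ (Fin n)))
    (hne : K.Nonempty) (hcl : IsClosed K)
    (pr : EuclideanSpace ℝ (Fin n) → EuclideanSpace ℝ (Fin n))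
    (hmeas : Measurable pr)
    (hsel : ∀ y, pr y ∈ K ∧ dist y (pr y) = infDist y K)
    (A : EuclideanSpace ℝ (Fin n) →
        (EuclideanSpace ℝ (Fin n) →L[ℝ] EuclideanSpace ℝ (Fin n)))
    (hA : ∀ᵐ y ∂(volume : Measure (EuclideanSpace ℝ (Fin n))),
        DiffExtended (uniqSet n K) pr y (A y))
    (ξ : EuclideanSpace ℝ (Fin n)) (σ2 : ℝ) (hσ2 : 0 < σ2) :
    (∫ y, (∑ i : Fin n, A y (EuclideanSpace.single i 1) i) * gaussDensity n ξ σ2 y) ≤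
      (1 / σ2) * ∑ i : Fin n, ∫ y, pr y i * (y i - ξ i) * gaussDensity n ξ σ2 y := by
  have key := fun i : Fin n => coord_key hne hmeas hsel A hA ξ hσ2 i
  have heq : (fun y => (∑ i : Fin n, A y (EuclideanSpace.single i 1) i) * gaussDensity n ξ σ2 y)
      = fun y => ∑ i : Fin n, A y (EuclideanSpace.single i 1) i * gaussDensity n ξ σ2 y := by
    funext y; rw [Finset.sum_mul]
  rw [heq, integral_finset_sum Finset.univ (fun i _ => (key i).1), Finset.mul_sum]
  exact Finset.sum_le_sum fun i _ => (key i).2
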